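/- The algebra B = B(η, φ) has an ideal other than 0 and B (i.e., fails to be simple) if and only if φ = η/(1−η) or φ = 0 or φ = 1. -/

import Mathlib

/-- the algebra `B = B(η, φ)` — the commutative `F`-algebra with basis
`{c, d, ρ}` and multiplication `c·c = c`, `d·d = d`, `c·d = η•c + η•d + ρ`, `c·ρ = π•c`,
`d·ρ = π•d`, `ρ·ρ = π•ρ` where `π = (1−η)φ − η` — has an ideal other than `0` and `B`
(i.e. fails to be simple) if and only if `φ = η/(1−η)` or `φ = 0` or `φ = 1`. -/
theorem B_eta_phi_simplicity
    {F B : Type*} [Field F] [NonUnitalNonAssocCommRing B] [Module F B]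
    [SMulCommClass F B B] [IsScalarTower F B B]
    (h2 : (2 : F) ≠ 0) (η φ π : F) (hη0 : η ≠ 0) (hη1 : η ≠ 1)
    (hπ : π = (1 - η) * φ - η)
    (c d ρ : B)
    (hind : LinearIndependent F ![c, d, ρ])
    (hspan : Submodule.span F ({c, d, ρ} : Set B) = ⊤)
    (hcc : c * c = c) (hdd : d * d = d)
    (hcd : c * d = η • c + η • d + ρ)
    (hcρ : c * ρ = π • c) (hdρ : d * ρ = π • d) (hρρ : ρ * ρ = π • ρ) :
    (∃ I : Submodule F B, (∀ y : B, ∀ i ∈ I, y * i ∈ I) ∧ I ≠ ⊥ ∧ I ≠ ⊤) ↔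
      (φ = η / (1 - η) ∨ φ = 0 ∨ φ = 1) := by
  have hη1' : (1 : F) - η ≠ 0 := sub_ne_zero.mpr (Ne.symm hη1)
  -- linear independence in coordinate form
  have hindc : ∀ a b e : F, a • c + b • d + e • ρ = 0 → a = 0 ∧ b = 0 ∧ e = 0 := by
    intro a b e h
    have h3 := Fintype.linearIndependent_iff.mp hind ![a, b, e] (by
      simpa [Fin.sum_univ_three] using h)
    exact ⟨h3 0, h3 1, h3 2⟩
  -- every element has coordinates
  have hrep : ∀ x : B, ∃ a b e : F, x = a • c + b • d + e • ρ := by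
    intro x
    have hx : x ∈ Submodule.span F ({c, d, ρ} : Set B) := hspan ▸ Submodule.mem_top
    rw [Submodule.mem_span_insert] at hx
    obtain ⟨a, z, hz, rfl⟩ := hx
    rw [Submodule.mem_span_pair] at hz
    obtain ⟨b, e, rfl⟩ := hz
    exact ⟨a, b, e, (add_assoc _ _ _).symm⟩
  -- multiplication in coordinates
  have hcmul : ∀ a b e : F, c * (a • c + b • d + e • ρ)
      = (a + η * b + π * e) • c + (η * b) • d + b • ρ := by
    intro a b e
    rw [mul_add, mul_add, mul_smul_comm, mul_smul_comm, mul_smul_comm, hcc, hcd, hcρ]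
    module
  have hdmul : ∀ a b e : F, d * (a • c + b • d + e • ρ)
      = (η * a) • c + (η * a + b + π * e) • d + a • ρ := by
    intro a b e
    rw [mul_add, mul_add, mul_smul_comm, mul_smul_comm, mul_smul_comm,
      mul_comm d c, hcd, hdd, hdρ]
    module
  have hρmul : ∀ a b e : F, ρ * (a • c + b • d + e • ρ)
      = (π * a) • c + (π * b) • d + (π * e) • ρ := by
    intro a b e
    rw [mul_add, mul_add, mul_smul_comm, mul_smul_comm, mul_smul_comm,
      mul_comm ρ c, mul_comm ρ d, hcρ, hdρ, hρρ]
    module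
  have hρne : ρ ≠ 0 := by
    intro h
    exact one_ne_zero (hindc 0 0 1 (by simp [h])).2.2
  constructor
  · rintro ⟨I, hI, hbot, htop⟩
    by_contra hcon
    push_neg at hcon
    obtain ⟨hφ1, hφ2, hφ3⟩ := hcon
    have hπ0 : π ≠ 0 := by
      intro h
      apply hφ1
      have h0 : (1 - η) * φ - η = 0 := hπ.symm.trans h
      field_simp
      linear_combination h0
    have hπη : η + π ≠ 0 := by
      intro h
      apply hφ2
      have h0 : (1 - η) * φ = 0 := by rw [hπ] at h; linear_combination h
      rcases mul_eq_zero.mp h0 with h1 | h1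
      · exact absurd h1 hη1'
      · exact h1
    have hππ : (1 : F) - 2 * η - π ≠ 0 := by
      intro h
      rw [hπ] at h
      have h0 : (1 - η) * (φ - 1) = 0 := by linear_combination -h
      rcases mul_eq_zero.mp h0 with h1 | h1
      · exact hη1' h1
      · exact hφ3 (sub_eq_zero.mp h1)
    obtain ⟨x, hxI, hx0⟩ := Submodule.ne_bot_iff I |>.mp hbot
    -- c ∉ I
    have hItop : ∀ z : B, z ∈ I → c ∈ I → False := by
      intro z hz hc
      apply htop
      have h1 : d * c ∈ I := hI d c hc
      rw [mul_comm, hcd] at h1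
      have h2 : d * (η • c + η • d + ρ) ∈ I := hI _ _ h1
      have h4 : (η + π) • d = d * (η • c + η • d + ρ) - η • (η • c + η • d + ρ) := by
        have h3 := hdmul η η 1
        rw [one_smul] at h3
        rw [h3]; module
      have h5 : (η + π) • d ∈ I := h4 ▸ I.sub_mem h2 (I.smul_mem η h1)
      have hd : d ∈ I := by
        have := I.smul_mem (η + π)⁻¹ h5
        rwa [smul_smul, inv_mul_cancel₀ hπη, one_smul] at this
      have hρI : ρ ∈ I := by
        have hh : ρ = (η • c + η • d + ρ) - η • c - η • d := by module
        rw [hh]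
        exact I.sub_mem (I.sub_mem h1 (I.smul_mem _ hc)) (I.smul_mem _ hd)
      rw [eq_top_iff, ← hspan, Submodule.span_le]
      rintro y hy
      simp only [Set.mem_insert_iff, Set.mem_singleton_iff] at hy
      rcases hy with rfl | rfl | rfl <;> assumption
    have hcI : c ∉ I := fun hc => hItop c hc hc
    have hdI : d ∉ I := by
      intro hd
      apply hcI
      have h1 : c * d ∈ I := hI c d hd
      rw [hcd] at h1
      have h2 : c * (η • c + η • d + ρ) ∈ I := hI _ _ h1
      have h4 : (η + π) • c = c * (η • c + η • d + ρ) - η • (η • c + η • d + ρ) := by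
        have h3 := hcmul η η 1
        rw [one_smul] at h3
        rw [h3]; module
      have h5 : (η + π) • c ∈ I := h4 ▸ I.sub_mem h2 (I.smul_mem η h1)
      have := I.smul_mem (η + π)⁻¹ h5
      rwa [smul_smul, inv_mul_cancel₀ hπη, one_smul] at this
    have fzero : ∀ a b e : F, a • c + b • d + e • ρ ∈ I →
        (1 - η) * a + (η + π) * b + (1 - η) * π * e = 0 := by
      intro a b e hy
      by_contra hf
      apply hcI
      have h1 : c * (a • c + b • d + e • ρ) ∈ I := hI _ _ hy
      have h1' : (a + η * b + π * e) • c + (η * b) • d + b • ρ ∈ I := by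
        rwa [hcmul] at h1
      have h2 : c * ((a + η * b + π * e) • c + (η * b) • d + b • ρ) ∈ I := hI _ _ h1'
      have h3 : ((1 - η) * a + (η + π) * b + (1 - η) * π * e) • c
          = c * ((a + η * b + π * e) • c + (η * b) • d + b • ρ)
            - η • ((a + η * b + π * e) • c + (η * b) • d + b • ρ) := by
        rw [hcmul]; module
      have h5 : ((1 - η) * a + (η + π) * b + (1 - η) * π * e) • c ∈ I :=
        h3 ▸ I.sub_mem h2 (I.smul_mem η h1')
      have := I.smul_mem ((1 - η) * a + (η + π) * b + (1 - η) * π * e)⁻¹ h5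
      rwa [smul_smul, inv_mul_cancel₀ hf, one_smul] at this
    have gzero : ∀ a b e : F, a • c + b • d + e • ρ ∈ I →
        (η + π) * a + (1 - η) * b + (1 - η) * π * e = 0 := by
      intro a b e hy
      by_contra hf
      apply hdI
      have h1 : d * (a • c + b • d + e • ρ) ∈ I := hI _ _ hy
      have h1' : (η * a) • c + (η * a + b + π * e) • d + a • ρ ∈ I := by
        rwa [hdmul] at h1
      have h2 : d * ((η * a) • c + (η * a + b + π * e) • d + a • ρ) ∈ I := hI _ _ h1'
      have h3 : ((η + π) * a + (1 - η) * b + (1 - η) * π * e) • d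
          = d * ((η * a) • c + (η * a + b + π * e) • d + a • ρ)
            - η • ((η * a) • c + (η * a + b + π * e) • d + a • ρ) := by
        rw [hdmul]; module
      have h5 : ((η + π) * a + (1 - η) * b + (1 - η) * π * e) • d ∈ I :=
        h3 ▸ I.sub_mem h2 (I.smul_mem η h1')
      have := I.smul_mem ((η + π) * a + (1 - η) * b + (1 - η) * π * e)⁻¹ h5
      rwa [smul_smul, inv_mul_cancel₀ hf, one_smul] at this
    obtain ⟨a, b, e, rfl⟩ := hrep x
    have f1 := fzero a b e hxI
    have g1 := gzero a b e hxI
    have hcx : (a + η * b + π * e) • c + (η * b) • d + b • ρ ∈ I := by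
      have := hI c _ hxI
      rwa [hcmul] at this
    have f2 := fzero _ _ _ hcx
    have g2 := gzero _ _ _ hcx
    have hab : a = b := by
      have h5 : (1 - 2 * η - π) * (a - b) = 0 := by linear_combination f1 - g1
      exact sub_eq_zero.mp ((mul_eq_zero.mp h5).resolve_left hππ)
    have hape : a + π * e = 0 := by
      have h6 : (1 - 2 * η - π) * (a + π * e) = 0 := by linear_combination f2 - g2
      exact (mul_eq_zero.mp h6).resolve_left hππ
    have he : e = 0 := by
      have h8 : ((η + π) * π) * e = 0 := by
        linear_combination (-1 : F) * f1 + (-(η + π)) * hab + (1 + π) * hape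
      exact (mul_eq_zero.mp h8).resolve_left (mul_ne_zero hπη hπ0)
    have ha : a = 0 := by rw [he, mul_zero, add_zero] at hape; exact hape
    apply hx0
    rw [ha, ← hab, ha, he]
    simp
  · intro hcase
    rcases hcase with h | h | h
    · -- π = 0 : ideal = span {ρ}
      have hπ0 : π = 0 := by
        rw [hπ, h]
        field_simp
        ring
      refine ⟨Submodule.span F {ρ}, ?_, ?_, ?_⟩
      · intro y i hi
        obtain ⟨t, rfl⟩ := Submodule.mem_span_singleton.mp hi
        have hy : y * t • ρ = 0 := by
          obtain ⟨a, b, e, rfl⟩ := hrep y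
          rw [mul_smul_comm, mul_comm, hρmul, hπ0]
          simp
        rw [hy]
        exact zero_mem _
      · rw [Submodule.ne_bot_iff]
        exact ⟨ρ, Submodule.mem_span_singleton_self ρ, hρne⟩
      · intro h
        have hc : c ∈ Submodule.span F ({ρ} : Set B) := h ▸ Submodule.mem_top
        obtain ⟨t, ht⟩ := Submodule.mem_span_singleton.mp hc
        have := hindc 1 0 (-t) (by linear_combination (norm := module) -ht)
        exact one_ne_zero this.1
    · -- π = -η : ideal = span {η•c + η•d + ρ}
      have hπη : π = -η := by rw [hπ, h]; ring
      set w : B := η • c + η • d + (1 : F) • ρ with hw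
      have hcw : c * w = η • w := by
        rw [hw, hcmul, hπη]; module
      have hdw : d * w = η • w := by
        rw [hw, hdmul, hπη]; module
      have hρw : ρ * w = π • w := by
        rw [hw, hρmul]; module
      refine ⟨Submodule.span F {w}, ?_, ?_, ?_⟩
      · intro y i hi
        obtain ⟨t, rfl⟩ := Submodule.mem_span_singleton.mp hi
        obtain ⟨a, b, e, rfl⟩ := hrep y
        rw [mul_smul_comm]
        apply Submodule.smul_mem
        rw [add_mul, add_mul, smul_mul_assoc, smul_mul_assoc, smul_mul_assoc,
          hcw, hdw, hρw, smul_smul, smul_smul, smul_smul]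
        have hwI : w ∈ Submodule.span F ({w} : Set B) := Submodule.mem_span_singleton_self w
        exact add_mem (add_mem (Submodule.smul_mem _ _ hwI) (Submodule.smul_mem _ _ hwI))
          (Submodule.smul_mem _ _ hwI)
      · rw [Submodule.ne_bot_iff]
        refine ⟨w, Submodule.mem_span_singleton_self w, ?_⟩
        intro h0
        exact one_ne_zero (hindc η η 1 (hw ▸ h0)).2.2
      · intro h
        have hc : c ∈ Submodule.span F ({w} : Set B) := h ▸ Submodule.mem_top
        obtain ⟨t, ht⟩ := Submodule.mem_span_singleton.mp hc
        rw [hw] at ht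
        have h9 := hindc (t * η - 1) (t * η) t (by linear_combination (norm := module) ht)
        have h10 := h9.1
        rw [h9.2.2] at h10
        exact one_ne_zero (by linear_combination -h10)
    · -- π = 1 - 2η : ideal = span {u, v}
      have hπ2 : π = 1 - 2 * η := by rw [hπ, h]; ring
      set u : B := (1 : F) • c + (-1 : F) • d + (0 : F) • ρ with hu
      set v : B := π • c + π • d + (-2 : F) • ρ with hv
      have hcu : c * u = (2⁻¹ : F) • u + (2⁻¹ : F) • v := by
        rw [hu, hv, hcmul]
        match_scalars <;> (subst hπ2; field_simp; try ring)
      have hdu : d * u = (2⁻¹ : F) • u + (-2⁻¹ : F) • v := by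
        rw [hu, hv, hdmul]
        match_scalars <;> (subst hπ2; field_simp; try ring)
      have hρu : ρ * u = π • u + (0 : F) • v := by
        rw [hu, hv, hρmul]
        match_scalars <;> ring
      have hcv : c * v = (-(2⁻¹ * π) : F) • u + (-(2⁻¹ * π) : F) • v := by
        rw [hu, hv, hcmul]
        match_scalars <;> (subst hπ2; field_simp; try ring)
      have hdv : d * v = ((2⁻¹ * π) : F) • u + (-(2⁻¹ * π) : F) • v := by
        rw [hu, hv, hdmul]
        match_scalars <;> (subst hπ2; field_simp; try ring)
      have hρv : ρ * v = (0 : F) • u + π • v := by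
        rw [hu, hv, hρmul]
        match_scalars <;> ring
      have huI : u ∈ Submodule.span F ({u, v} : Set B) :=
        Submodule.subset_span (Set.mem_insert _ _)
      have hvI : v ∈ Submodule.span F ({u, v} : Set B) :=
        Submodule.subset_span (Set.mem_insert_of_mem _ rfl)
      have hmemuv : ∀ s t : F, s • u + t • v ∈ Submodule.span F ({u, v} : Set B) :=
        fun s t => add_mem (Submodule.smul_mem _ _ huI) (Submodule.smul_mem _ _ hvI)
      have hyu : ∀ y : B, y * u ∈ Submodule.span F ({u, v} : Set B) := by
        intro y
        obtain ⟨a, b, e, rfl⟩ := hrep y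
        rw [add_mul, add_mul, smul_mul_assoc, smul_mul_assoc, smul_mul_assoc,
          hcu, hdu, hρu]
        exact add_mem (add_mem (Submodule.smul_mem _ _ (hmemuv _ _))
          (Submodule.smul_mem _ _ (hmemuv _ _))) (Submodule.smul_mem _ _ (hmemuv _ _))
      have hyv : ∀ y : B, y * v ∈ Submodule.span F ({u, v} : Set B) := by
        intro y
        obtain ⟨a, b, e, rfl⟩ := hrep y
        rw [add_mul, add_mul, smul_mul_assoc, smul_mul_assoc, smul_mul_assoc,
          hcv, hdv, hρv]
        exact add_mem (add_mem (Submodule.smul_mem _ _ (hmemuv _ _))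
          (Submodule.smul_mem _ _ (hmemuv _ _))) (Submodule.smul_mem _ _ (hmemuv _ _))
      refine ⟨Submodule.span F {u, v}, ?_, ?_, ?_⟩
      · intro y i hi
        obtain ⟨s, t, rfl⟩ := Submodule.mem_span_pair.mp hi
        rw [mul_add, mul_smul_comm, mul_smul_comm]
        exact add_mem (Submodule.smul_mem _ _ (hyu y)) (Submodule.smul_mem _ _ (hyv y))
      · rw [Submodule.ne_bot_iff]
        refine ⟨u, huI, ?_⟩
        intro h0
        exact one_ne_zero (hindc 1 (-1) 0 (hu ▸ h0)).1
      · intro h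
        have hc : c ∈ Submodule.span F ({u, v} : Set B) := h ▸ Submodule.mem_top
        obtain ⟨s, t, ht⟩ := Submodule.mem_span_pair.mp hc
        rw [hu, hv] at ht
        have h9 := hindc (s + t * π - 1) (-s + t * π) ((-2) * t)
          (by linear_combination (norm := module) ht)
        have ht0 : t = 0 := by
          rcases mul_eq_zero.mp h9.2.2 with h' | h'
          · exact absurd (by linear_combination -h' : (2:F) = 0) h2
          · exact h'
        have hs0 : s = 0 := by linear_combination -h9.2.1 + π * ht0
        exact one_ne_zero (by linear_combination -h9.1 + π * ht0 + hs0)
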